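/- For every q ≥ 3 there is a constant c = c(q) > 0 such that f(n;q,3) > 2^{c n²} for all sufficiently large n: there exists a q-coloring of the triples of a set of size exceeding 2^{c n²} such that every n-element subset contains triples of at least three distinct colors. -/

import Mathlib

/-- `hasColoring N n q t` : there is a q-coloring of the triples of an N-element set in which
every n-element subset induces at least t distinct colors. -/
def hasColoring (N n q t : ℕ) : Prop :=
  ∃ χ : Finset ℕ → Fin q, ∀ A ⊆ Finset.range N, A.card = n →
    t ≤ ((Finset.powersetCard 3 A).image χ).card

open Finset

lemma subset_pair {q : ℕ} (hq : 0 < q) (s : Finset (Fin q)) (h : s.card ≤ 2) :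
    ∃ a b : Fin q, s ⊆ {a, b} := by
  rcases s.eq_empty_or_nonempty with rfl | ⟨a, ha⟩
  · exact ⟨⟨0, hq⟩, ⟨0, hq⟩, by simp⟩
  · have h1 : (s.erase a).card ≤ 1 := by
      have := Finset.card_erase_of_mem ha
      omega
    have : Nonempty (Fin q) := ⟨⟨0, hq⟩⟩
    obtain ⟨b, hb⟩ := Finset.card_le_one_iff_subset_singleton.mp h1
    refine ⟨a, b, fun x hx => ?_⟩
    rcases eq_or_ne x a with rfl | hxa
    · simp
    · have : x ∈ s.erase a := Finset.mem_erase.mpr ⟨hxa, hx⟩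
      have := hb this
      simp only [Finset.mem_singleton] at this
      simp [this]

lemma exists_good (N n q : ℕ) (hq : 3 ≤ q) (hnN : n ≤ N)
    (H : N.choose n * (q ^ 2 * (2 ^ n.choose 3 * q ^ (N.choose 3 - n.choose 3)))
      < q ^ N.choose 3) :
    hasColoring N n q 3 := by
  classical
  have hq0 : 0 < q := by omega
  set S : Finset (Finset ℕ) := (Finset.range N).powersetCard 3 with hSdef
  have hScard : S.card = N.choose 3 := by
    simp [hSdef, Finset.card_powersetCard, Finset.card_range]
  set G : Finset (∀ a ∈ S, Fin q) := S.pi (fun _ => (Finset.univ : Finset (Fin q))) with hGdef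
  have hGcard : G.card = q ^ N.choose 3 := by
    rw [hGdef, Finset.card_pi]
    simp [hScard, Finset.prod_const]
  set χ : (∀ a ∈ S, Fin q) → Finset ℕ → Fin q :=
    fun g a => if h : a ∈ S then g a h else ⟨0, hq0⟩ with hχdef
  set Bad : Finset (∀ a ∈ S, Fin q) :=
    G.filter (fun g => ∃ A ∈ (Finset.range N).powersetCard n,
      ((Finset.powersetCard 3 A).image (χ g)).card < 3) with hBadDef
  -- Bad is contained in a union of restricted pi sets
  have hsub : Bad ⊆ ((Finset.range N).powersetCard n).biUnion (fun A =>
      (Finset.univ : Finset (Fin q × Fin q)).biUnion (fun p =>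
        S.pi (fun a => if a ∈ Finset.powersetCard 3 A then ({p.1, p.2} : Finset (Fin q))
          else Finset.univ))) := by
    intro g hg
    rw [hBadDef, Finset.mem_filter] at hg
    obtain ⟨-, A, hA, hcard⟩ := hg
    obtain ⟨a, b, hab⟩ := subset_pair hq0 _ (by omega :
      ((Finset.powersetCard 3 A).image (χ g)).card ≤ 2)
    refine Finset.mem_biUnion.mpr ⟨A, hA, Finset.mem_biUnion.mpr ⟨(a, b),
      Finset.mem_univ _, ?_⟩⟩
    rw [Finset.mem_pi]
    intro s hs
    by_cases hsa : s ∈ Finset.powersetCard 3 A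
    · have h1 : χ g s ∈ (Finset.powersetCard 3 A).image (χ g) :=
        Finset.mem_image_of_mem _ hsa
      have h2 := hab h1
      have h3 : χ g s = g s hs := dif_pos hs
      rw [if_pos hsa, ← h3]
      exact h2
    · rw [if_neg hsa]; exact Finset.mem_univ _
  -- cardinality bound for each restricted pi set
  have hpibound : ∀ A ∈ (Finset.range N).powersetCard n, ∀ p : Fin q × Fin q,
      (S.pi (fun a => if a ∈ Finset.powersetCard 3 A then ({p.1, p.2} : Finset (Fin q))
        else Finset.univ)).card ≤ 2 ^ n.choose 3 * q ^ (N.choose 3 - n.choose 3) := by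
    intro A hA p
    obtain ⟨hAsub, hAcard⟩ := Finset.mem_powersetCard.mp hA
    have hPsub : Finset.powersetCard 3 A ⊆ S := by
      rw [hSdef]; exact Finset.powersetCard_mono hAsub
    have hPcard : (Finset.powersetCard 3 A).card = n.choose 3 := by
      rw [Finset.card_powersetCard, hAcard]
    rw [Finset.card_pi]
    have heq : ∀ a ∈ S,
        ((if a ∈ Finset.powersetCard 3 A then ({p.1, p.2} : Finset (Fin q))
          else Finset.univ)).card
        = if a ∈ Finset.powersetCard 3 A then ({p.1, p.2} : Finset (Fin q)).card else q := by
      intro a _; split <;> simp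
    rw [Finset.prod_congr rfl heq, Finset.prod_ite, Finset.prod_const, Finset.prod_const]
    have hfil : S.filter (· ∈ Finset.powersetCard 3 A) = Finset.powersetCard 3 A := by
      rw [Finset.filter_mem_eq_inter, Finset.inter_eq_right]
      exact hPsub
    have hfilnot : (S.filter (fun a => ¬ a ∈ Finset.powersetCard 3 A)).card
        = N.choose 3 - n.choose 3 := by
      rw [Finset.filter_not, Finset.card_sdiff_of_subset (Finset.filter_subset _ _), hfil, hScard, hPcard]
    rw [hfil, hfilnot, hPcard]
    have hab2 : ({p.1, p.2} : Finset (Fin q)).card ≤ 2 := by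
      apply le_trans (Finset.card_insert_le _ _); simp
    exact Nat.mul_le_mul_right _ (Nat.pow_le_pow_left hab2 _)
  -- cardinality of Bad is strictly less than that of G
  have hBadcard : Bad.card < G.card := by
    calc Bad.card ≤ _ := Finset.card_le_card hsub
    _ ≤ ∑ A ∈ (Finset.range N).powersetCard n, ((Finset.univ : Finset (Fin q × Fin q)).biUnion
        (fun p => S.pi (fun a => if a ∈ Finset.powersetCard 3 A then
          ({p.1, p.2} : Finset (Fin q)) else Finset.univ))).card :=
      Finset.card_biUnion_le
    _ ≤ ∑ A ∈ (Finset.range N).powersetCard n,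
        (q ^ 2 * (2 ^ n.choose 3 * q ^ (N.choose 3 - n.choose 3))) := by
      refine Finset.sum_le_sum fun A hA => ?_
      calc ((Finset.univ : Finset (Fin q × Fin q)).biUnion _).card
          ≤ ∑ p : Fin q × Fin q, _ := Finset.card_biUnion_le
        _ ≤ ∑ _p : Fin q × Fin q, (2 ^ n.choose 3 * q ^ (N.choose 3 - n.choose 3)) :=
          Finset.sum_le_sum fun p _ => hpibound A hA p
        _ = q ^ 2 * (2 ^ n.choose 3 * q ^ (N.choose 3 - n.choose 3)) := by
          rw [Finset.sum_const]
          simp [Fintype.card_prod, sq, Nat.mul_assoc]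
    _ = N.choose n * (q ^ 2 * (2 ^ n.choose 3 * q ^ (N.choose 3 - n.choose 3))) := by
      rw [Finset.sum_const, Finset.card_powersetCard, Finset.card_range, smul_eq_mul]
    _ < q ^ N.choose 3 := H
    _ = G.card := hGcard.symm
  -- extract a good coloring
  have hne : (G \ Bad).Nonempty := by
    rw [Finset.sdiff_nonempty]
    intro hGB
    exact absurd (Finset.card_le_card hGB) (not_le.mpr hBadcard)
  obtain ⟨g, hg⟩ := hne
  rw [Finset.mem_sdiff] at hg
  refine ⟨χ g, fun A hAsub hAcard => ?_⟩
  by_contra hlt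
  push_neg at hlt
  exact hg.2 (Finset.mem_filter.mpr ⟨hg.1,
    ⟨A, Finset.mem_powersetCard.mpr ⟨hAsub, hAcard⟩, hlt⟩⟩)

/-- for every q ≥ 3 there is c > 0 with f(n;q,3) > 2^{cn²} for all large n. -/
theorem stmt_16 (q : ℕ) (hq : 3 ≤ q) :
    ∃ c : ℝ, 0 < c ∧ ∃ n₀ : ℕ, ∀ n : ℕ, n₀ < n →
      ∃ N : ℕ, (2 : ℝ) ^ (c * (n : ℝ) ^ 2) < N ∧ hasColoring N n q 3 := by
  refine ⟨1/100, by norm_num, 1000, fun n hn => ?_⟩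
  set m : ℕ := n ^ 2 / 50 with hmdef
  -- basic facts about m
  have hdm := Nat.div_add_mod (n ^ 2) 50
  have hmod := Nat.mod_lt (n ^ 2) (show 0 < 50 by norm_num)
  have hnsq : 1001 * 1001 ≤ n ^ 2 := by
    rw [pow_two]; exact Nat.mul_le_mul (by omega) (by omega)
  have h50 : 50 * m ≤ n ^ 2 := by omega
  have hm1 : 1 ≤ m := by omega
  have hn2lt : n ^ 2 < 100 * m := by omega
  -- key inequality : 2*(m*n) + 8 ≤ n.choose 3
  have hBkey : 2 * (m * n) + 8 ≤ n.choose 3 := by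
    have h1 : n.descFactorial 3 = 6 * n.choose 3 := by
      rw [Nat.descFactorial_eq_factorial_mul_choose]; norm_num [Nat.factorial]
    have h2 : n.descFactorial 3 = (n - 2) * ((n - 1) * (n * 1)) := by
      simp [Nat.descFactorial]
    obtain ⟨k, rfl⟩ : ∃ k, n = k + 1001 := ⟨n - 1001, by omega⟩
    have h3 : (k + 1001) - 2 = k + 999 := by omega
    have h4 : (k + 1001) - 1 = k + 1000 := by omega
    rw [h3, h4, mul_one] at h2
    have h5 : 6 * (2 * (m * (k + 1001)) + 8) ≤ 6 * ((k + 1001).choose 3) := by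
      rw [← h1, h2]
      nlinarith [h50, sq_nonneg (k + 1001)]
    omega
  set B : ℕ := n.choose 3 with hBdef
  set M : ℕ := B - 2 with hMdef
  have hB8 : 8 ≤ B := by omega
  have hMhalf : m * n + 3 ≤ M / 2 := by
    rw [Nat.le_div_iff_mul_le (by norm_num)]
    omega
  -- 2 ^ (M + M/2) ≤ 3 ^ M
  have h3pow : 2 ^ (M + M / 2) ≤ 3 ^ M := by
    have hsq : (2 ^ (M + M / 2)) ^ 2 ≤ (3 ^ M) ^ 2 := by
      rw [← pow_mul, ← pow_mul]
      calc 2 ^ ((M + M / 2) * 2) ≤ 2 ^ (3 * M) :=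
            Nat.pow_le_pow_right (by norm_num) (by omega)
        _ = (2 ^ 3) ^ M := by rw [pow_mul]
        _ ≤ (3 ^ 2) ^ M := Nat.pow_le_pow_left (by norm_num) _
        _ = 3 ^ (M * 2) := by rw [← pow_mul, Nat.mul_comm]
    exact (Nat.pow_le_pow_iff_left (by norm_num)).mp hsq
  -- n ≤ 2 ^ m
  have hnm : n ≤ m := by
    rw [hmdef, Nat.le_div_iff_mul_le (by norm_num)]
    nlinarith
  have hnN : n ≤ 2 ^ m :=
    le_trans (Nat.le_of_lt (Nat.lt_two_pow_self (n := n))) (Nat.pow_le_pow_right (by norm_num) hnm)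
  -- the main counting hypothesis
  have hBSc : B ≤ (2 ^ m).choose 3 := Nat.choose_le_choose 3 hnN
  have hq0 : 0 < q := by omega
  have hcore : (2 ^ m).choose n * 2 ^ B < 3 ^ M := by
    calc (2 ^ m).choose n * 2 ^ B ≤ (2 ^ m) ^ n * 2 ^ B :=
          Nat.mul_le_mul_right _ (Nat.choose_le_pow _ _)
      _ = 2 ^ (m * n + B) := by rw [← pow_mul, ← pow_add]
      _ < 2 ^ (M + M / 2) := by
          apply Nat.pow_lt_pow_right (by norm_num)
          omega
      _ ≤ 3 ^ M := h3pow
  have hmain : (2 ^ m).choose n * (q ^ 2 * (2 ^ B * q ^ ((2 ^ m).choose 3 - B)))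
      < q ^ (2 ^ m).choose 3 := by
    calc (2 ^ m).choose n * (q ^ 2 * (2 ^ B * q ^ ((2 ^ m).choose 3 - B)))
        = (q ^ 2 * ((2 ^ m).choose n * 2 ^ B)) * q ^ ((2 ^ m).choose 3 - B) := by ring
      _ < (q ^ 2 * 3 ^ M) * q ^ ((2 ^ m).choose 3 - B) := by
          gcongr
      _ ≤ (q ^ 2 * q ^ M) * q ^ ((2 ^ m).choose 3 - B) := by
          gcongr
      _ = q ^ (2 + M + ((2 ^ m).choose 3 - B)) := by rw [pow_add, pow_add]
      _ = q ^ (2 ^ m).choose 3 := by congr 1; omega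
  refine ⟨2 ^ m, ?_, exists_good _ _ _ hq hnN hmain⟩
  have hcast : ((2 ^ m : ℕ) : ℝ) = (2 : ℝ) ^ (m : ℕ) := by push_cast; ring
  rw [hcast, ← Real.rpow_natCast 2 m]
  apply Real.rpow_lt_rpow_of_exponent_lt (by norm_num)
  have : (n : ℝ) ^ 2 < 100 * m := by exact_mod_cast hn2lt
  linarith
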